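/- Let k be a field and Δ a standard rank-rk Γ̃-module with p-basis b_{i,j} = rk·a_{i,j} + i (0 ≤ i ≤ rk−1, 0 ≤ j ≤ p−1). Let A ⊆ k[t] be the k-subalgebra spanned by the monomials t^γ with γ ∈ Γ̃ (equivalently, generated by t^{rk·p} and t^{rk·q}), and let φ : A^{rk·p} → k[t] be the A-linear map sending the standard basis vector e_{(i,j)} to t^{b_{i,j}} (so the image of φ is the A-submodule k[Δ] spanned by {t^d : d ∈ Δ}). Then the kernel of φ (the module of syzygies of the generators t^{b_{i,j}} of k[Δ]) admits a minimal generating set consisting entirely of vectors with exactly two nonzero coordinates of the form t^{γ}·e_{(i,j)} − t^{γ'}·e_{(u,v)} with γ, γ' ∈ Γ̃. -/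

import Mathlib

open PowerSeries

set_option synthInstance.maxHeartbeats 1000000

/-- `ν f = n` : the order of the power series `f` equals `n`. -/
def HasOrd {k : Type*} [Semiring k] (f : PowerSeries k) (n : ℕ) : Prop :=
  PowerSeries.coeff n f ≠ 0 ∧ ∀ m < n, PowerSeries.coeff m f = 0

/-- The set of orders of the nonzero elements of `S ⊆ k[[t]]`. -/
def ValSet {k : Type*} [Semiring k] (S : Set (PowerSeries k)) : Set ℕ :=
  {n | ∃ f ∈ S, HasOrd f n}

/-- `Γ̃ = rk·(ℕp + ℕq)`. -/
def GammaT (rk p q : ℕ) : Set ℕ := {x | ∃ a b : ℕ, x = rk * (a * p + b * q)}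

/-- The gap counting function `γ_Δ(b) = |[b,∞) \ Δ|`. -/
noncomputable def gapCount (Δ : Set ℕ) (b : ℕ) : ℕ := {x : ℕ | b ≤ x ∧ x ∉ Δ}.ncard

/-- The element `r` of `k[[t]]` lies in `R`, the image of `k[[z^p, z^q]]` under `z = t^rk`,
i.e. its support lies in `Γ̃ = rk·(ℕp + ℕq)`. -/
def InTorusRing {k : Type*} [Semiring k] (rk p q : ℕ) (r : PowerSeries k) : Prop :=
  ∀ n : ℕ, n ∉ GammaT rk p q → PowerSeries.coeff n r = 0

/-- `(a i j)` is the `p`-basis data of the standard rank-`rk` `Γ̃`-module `Δ`: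
`a i j` is the least natural number `a` with `rk·a + i ∈ Δ` and `a ≡ j·q (mod p)`. -/
def IsPBasis (rk p q : ℕ) (Δ : Set ℕ) (a : ℕ → ℕ → ℕ) : Prop :=
  ∀ i < rk, ∀ j < p,
    rk * a i j + i ∈ Δ ∧ a i j % p = (j * q) % p ∧
    ∀ a' : ℕ, rk * a' + i ∈ Δ → a' % p = (j * q) % p → a i j ≤ a'

/-- The subalgebra `A = k[t^{rk·p}, t^{rk·q}] ⊆ k[t]`, i.e. the span of the monomials
`t^γ` with `γ ∈ Γ̃`. -/
noncomputable def torusAlg (k : Type*) [Field k] (rk p q : ℕ) : Subalgebra k (Polynomial k) :=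
  Algebra.adjoin k ({Polynomial.X ^ (rk * p), Polynomial.X ^ (rk * q)} : Set (Polynomial k))

set_option maxHeartbeats 1000000

noncomputable def Bf (p q rk n : ℕ) : ℕ := (((n / rk : ℕ) : ZMod p) * (↑q)⁻¹).val

lemma Bf_lt (p q rk n : ℕ) (hp : 0 < p) : Bf p q rk n < p := by
  haveI : NeZero p := ⟨hp.ne'⟩
  exact ZMod.val_lt _

lemma Bf_spec (p q rk : ℕ) (hrk : 0 < rk) (hcop : Nat.Coprime p q) (a b : ℕ) :
    Bf p q rk (rk * (a * p + b * q)) = b % p := by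
  unfold Bf
  rw [Nat.mul_div_cancel_left _ hrk]
  have h1 : ((a * p + b * q : ℕ) : ZMod p) = (b : ZMod p) * q := by
    push_cast
    simp [ZMod.natCast_self p]
  rw [h1, mul_assoc, ZMod.coe_mul_inv_eq_one q hcop.symm, mul_one, ZMod.val_natCast]

lemma gammaT_add {rk p q x y : ℕ} (hx : x ∈ GammaT rk p q) (hy : y ∈ GammaT rk p q) :
    x + y ∈ GammaT rk p q := by
  obtain ⟨a, b, rfl⟩ := hx
  obtain ⟨a', b', rfl⟩ := hy
  exact ⟨a + a', b + b', by ring⟩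

lemma X_pow_mem_torusAlg (k : Type*) [Field k] (rk p q : ℕ) {γ : ℕ} (h : γ ∈ GammaT rk p q) :
    (Polynomial.X : Polynomial k) ^ γ ∈ torusAlg k rk p q := by
  obtain ⟨a, b, rfl⟩ := h
  have h1 : (Polynomial.X : Polynomial k) ^ (rk * p) ∈ torusAlg k rk p q :=
    Algebra.subset_adjoin (Set.mem_insert _ _)
  have h2 : (Polynomial.X : Polynomial k) ^ (rk * q) ∈ torusAlg k rk p q :=
    Algebra.subset_adjoin (Set.mem_insert_of_mem _ rfl)
  have h3 := mul_mem (pow_mem h1 a) (pow_mem h2 b)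
  rw [← pow_mul, ← pow_mul, ← pow_add] at h3
  have he : rk * (a * p + b * q) = rk * p * a + rk * q * b := by ring
  rw [he]
  exact h3

lemma coeff_mem_gammaT (k : Type*) [Field k] (rk p q : ℕ) {f : Polynomial k}
    (hf : f ∈ torusAlg k rk p q) {n : ℕ} (hn : f.coeff n ≠ 0) : n ∈ GammaT rk p q := by
  revert n
  let T : Subalgebra k (Polynomial k) :=
    { carrier := {f : Polynomial k | ∀ n : ℕ, f.coeff n ≠ 0 → n ∈ GammaT rk p q}
      mul_mem' := by
        intro f g hf hg n hn
        rw [Polynomial.coeff_mul] at hn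
        obtain ⟨x, hx, hne⟩ := Finset.exists_ne_zero_of_sum_ne_zero hn
        rw [Finset.HasAntidiagonal.mem_antidiagonal] at hx
        have h1 : f.coeff x.1 ≠ 0 := fun h => hne (by simp [h])
        have h2 : g.coeff x.2 ≠ 0 := fun h => hne (by simp [h])
        rw [← hx]
        exact gammaT_add (hf _ h1) (hg _ h2)
      add_mem' := by
        intro f g hf hg n hn
        rw [Polynomial.coeff_add] at hn
        by_cases h : f.coeff n = 0
        · exact hg n (by intro h2; rw [h, h2] at hn; simp at hn)
        · exact hf n h
      algebraMap_mem' := by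
        intro c n hn
        have hz : (algebraMap k (Polynomial k) c) = Polynomial.C c := rfl
        rw [hz, Polynomial.coeff_C] at hn
        have hn0 : n = 0 := by by_contra h; simp [h] at hn
        subst hn0
        exact ⟨0, 0, by ring⟩ }
  have hle : torusAlg k rk p q ≤ T := by
    apply Algebra.adjoin_le
    intro x hx
    simp only [Set.mem_insert_iff, Set.mem_singleton_iff] at hx
    rcases hx with rfl | rfl
    · intro n hn
      rw [Polynomial.coeff_X_pow] at hn
      have hn0 : n = rk * p := by by_contra h; simp [h] at hn
      subst hn0
      exact ⟨1, 0, by ring⟩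
    · intro n hn
      rw [Polynomial.coeff_X_pow] at hn
      have hn0 : n = rk * q := by by_contra h; simp [h] at hn
      subst hn0
      exact ⟨0, 1, by ring⟩
  exact hle hf

lemma gammaT_dvd_rk {rk p q n : ℕ} (hn : n ∈ GammaT rk p q) : rk ∣ n := by
  obtain ⟨a, b, rfl⟩ := hn; exact ⟨_, rfl⟩

lemma key_zero (p q rk : ℕ) (hrk : 0 < rk) (hcop : Nat.Coprime p q) {n : ℕ}
    (hn : n ∈ GammaT rk p q) (hB : Bf p q rk n = 0) : ∃ A : ℕ, n = rk * (A * p) := by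
  obtain ⟨A, B, rfl⟩ := hn
  rw [Bf_spec p q rk hrk hcop] at hB
  obtain ⟨B', rfl⟩ : p ∣ B := Nat.dvd_of_mod_eq_zero hB
  exact ⟨A + B' * q, by ring⟩

lemma key_step (p q rk : ℕ) (hp : 0 < p) (hrk : 0 < rk) (hcop : Nat.Coprime p q) {n : ℕ}
    (hn : n ∈ GammaT rk p q) (hB : Bf p q rk n ≠ 0) :
    ∃ m : ℕ, m ∈ GammaT rk p q ∧ n = m + rk * q ∧
      ∀ c : ℕ, m + rk * (p * c) ∈ GammaT rk p q ∧
        Bf p q rk (m + rk * (p * c)) = Bf p q rk n - 1 := by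
  obtain ⟨A, B, rfl⟩ := hn
  have hBs := Bf_spec p q rk hrk hcop A B
  have hB1 : 1 ≤ B := by
    rcases Nat.eq_zero_or_pos B with h | h
    · exfalso; apply hB; rw [hBs, h]; simp
    · exact h
  obtain ⟨B', rfl⟩ : ∃ B', B = B' + 1 := ⟨B - 1, by omega⟩
  refine ⟨rk * (A * p + B' * q), ⟨A, B', rfl⟩, by ring, ?_⟩
  intro c
  constructor
  · exact ⟨A + c, B', by ring⟩
  · have h1 : rk * (A * p + B' * q) + rk * (p * c) = rk * ((A + c) * p + B' * q) := by ring
    rw [h1, Bf_spec p q rk hrk hcop, hBs]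
    -- ⊢ B' % p = (B' + 1) % p - 1, given (B' + 1) % p ≠ 0
    rw [hBs] at hB
    have h2 : (B' + 1) % p = (B' % p + 1) % p := by
      conv_lhs => rw [Nat.add_mod]
      simp
    have h3 : B' % p < p := Nat.mod_lt _ hp
    rcases Nat.lt_or_ge (B' % p + 1) p with h4 | h4
    · rw [h2, Nat.mod_eq_of_lt h4]; omega
    · have h5 : B' % p + 1 = p := by omega
      exfalso
      apply hB
      rw [h2, h5, Nat.mod_self]

lemma exists_minimal_subset {α : Type*} (P : Set α → Prop) :
    ∀ (n : ℕ) (G : Set α), G.Finite → G.ncard = n → P G →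
      ∃ G₀, G₀ ⊆ G ∧ P G₀ ∧ ∀ G' ⊆ G₀, G' ≠ G₀ → ¬ P G' := by
  intro n
  induction n using Nat.strong_induction_on with
  | _ n ih =>
    intro G hfin hcard hP
    by_cases h : ∃ G', G' ⊆ G ∧ G' ≠ G ∧ P G'
    · obtain ⟨G', hsub, hne, hP'⟩ := h
      have hlt : G'.ncard < n :=
        hcard ▸ Set.ncard_lt_ncard (ssubset_of_subset_of_ne hsub hne) hfin
      obtain ⟨G₀, h1, h2, h3⟩ := ih _ hlt G' (hfin.subset hsub) rfl hP'
      exact ⟨G₀, h1.trans hsub, h2, h3⟩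
    · push_neg at h
      exact ⟨G, subset_rfl, hP, fun G' hs hne => h G' hs hne⟩

lemma inj_exp (p q rk : ℕ) (hrk : 0 < rk) (hcop : Nat.Coprime p q)
    (a : ℕ → ℕ → ℕ) (hamod : ∀ i < rk, ∀ j < p, a i j % p = (j * q) % p)
    {i u j v A A' : ℕ} (hi : i < rk) (hu : u < rk) (hj : j < p) (hv : v < p)
    (h : rk * (A * p) + (rk * a i j + i) = rk * (A' * p) + (rk * a u v + u)) :
    i = u ∧ j = v := by
  have h2 : rk * (a i j + A * p) + i = rk * (a u v + A' * p) + u := by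
    rw [show rk * (a i j + A * p) + i = rk * (A * p) + (rk * a i j + i) by ring,
      show rk * (a u v + A' * p) + u = rk * (A' * p) + (rk * a u v + u) by ring]
    exact h
  have hiu : i = u := by
    have h3 := congrArg (· % rk) h2
    simpa [Nat.mul_add_mod, Nat.mod_eq_of_lt hi, Nat.mod_eq_of_lt hu] using h3
  subst hiu
  have h4 : rk * (a i j + A * p) = rk * (a i v + A' * p) := by omega
  have h5 : a i j + A * p = a i v + A' * p := Nat.eq_of_mul_eq_mul_left hrk h4
  have h6 : a i j % p = a i v % p := by
    have := congrArg (· % p) h5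
    simpa [Nat.add_mul_mod_self_left] using this
  have h7 : (j * q) % p = (v * q) % p := by
    rw [← hamod i hi j hj, ← hamod i hi v hv]; exact h6
  have h8 : j % p = v % p :=
    Nat.ModEq.cancel_right_of_coprime hcop h7
  rw [Nat.mod_eq_of_lt hj, Nat.mod_eq_of_lt hv] at h8
  exact ⟨rfl, h8⟩

lemma base_zero {k : Type*} [Field k] (p q rk : ℕ) (hp : 0 < p) (hrk : 0 < rk)
    (hcop : Nat.Coprime p q)
    (a : ℕ → ℕ → ℕ) (hamod : ∀ i < rk, ∀ j < p, a i j % p = (j * q) % p)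
    (v : (Fin rk × Fin p) → ↥(torusAlg k rk p q))
    (hall : ∀ r : Fin rk × Fin p, ∀ n ∈ ((v r : Polynomial k)).support, Bf p q rk n = 0)
    (hv : ∑ r : Fin rk × Fin p,
        (v r : Polynomial k) * Polynomial.X ^ (rk * a (r.1 : ℕ) (r.2 : ℕ) + (r.1 : ℕ)) = 0) :
    v = 0 := by
  funext r
  apply Subtype.ext
  have hvr : (v r : Polynomial k) = 0 := by
    apply Polynomial.ext
    intro n
    rw [Polynomial.coeff_zero]
    by_contra hcne
    have hsupp : n ∈ ((v r : Polynomial k)).support := Polynomial.mem_support_iff.mpr hcne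
    have hB0 := hall r n hsupp
    have hnG := coeff_mem_gammaT k rk p q (v r).2 hcne
    obtain ⟨An, hAn⟩ := key_zero p q rk hrk hcop hnG hB0
    have h0 : Polynomial.coeff
        (∑ r' : Fin rk × Fin p,
          (v r' : Polynomial k) * Polynomial.X ^ (rk * a (r'.1 : ℕ) (r'.2 : ℕ) + (r'.1 : ℕ)))
        (n + (rk * a (r.1 : ℕ) (r.2 : ℕ) + (r.1 : ℕ))) = 0 := by rw [hv]; simp
    rw [Polynomial.finset_sum_coeff] at h0
    rw [Finset.sum_eq_single_of_mem r (Finset.mem_univ r)] at h0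
    · rw [Polynomial.coeff_mul_X_pow'] at h0
      simp only [le_add_iff_nonneg_left, zero_le, if_true, Nat.add_sub_cancel] at h0
      exact hcne h0
    · intro r' _ hne
      rw [Polynomial.coeff_mul_X_pow']
      split_ifs with hle
      · by_contra hc2
        have hsupp' : (n + (rk * a (r.1 : ℕ) (r.2 : ℕ) + (r.1 : ℕ))
              - (rk * a (r'.1 : ℕ) (r'.2 : ℕ) + (r'.1 : ℕ)))
            ∈ ((v r' : Polynomial k)).support := Polynomial.mem_support_iff.mpr hc2
        have hB0' := hall r' _ hsupp'
        have hG' := coeff_mem_gammaT k rk p q (v r').2 hc2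
        obtain ⟨An', hAn'⟩ := key_zero p q rk hrk hcop hG' hB0'
        have heq : rk * (An' * p) + (rk * a (r'.1 : ℕ) (r'.2 : ℕ) + (r'.1 : ℕ))
            = rk * (An * p) + (rk * a (r.1 : ℕ) (r.2 : ℕ) + (r.1 : ℕ)) := by
          rw [← hAn, ← hAn']
          exact Nat.sub_add_cancel hle
        obtain ⟨h1, h2⟩ := inj_exp p q rk hrk hcop a hamod
          r'.1.isLt r.1.isLt r'.2.isLt r.2.isLt heq
        exact hne (Prod.ext (Fin.ext h1) (Fin.ext h2))
      · rfl
  simpa using hvr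

def nxF (p : ℕ) (hp : 0 < p) (j : Fin p) : Fin p := ⟨((j : ℕ) + 1) % p, Nat.mod_lt _ hp⟩

def cF (p q rk : ℕ) (hp : 0 < p) (a : ℕ → ℕ → ℕ) (r : Fin rk × Fin p) : ℕ :=
  (a (r.1 : ℕ) (r.2 : ℕ) + q - a (r.1 : ℕ) ((nxF p hp r.2 : Fin p) : ℕ)) / p

noncomputable def sF (k : Type*) [Field k] (p q rk : ℕ) (hp : 0 < p) (a : ℕ → ℕ → ℕ)
    (r : Fin rk × Fin p) : (Fin rk × Fin p) → ↥(torusAlg k rk p q) :=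
  Pi.single r ⟨Polynomial.X ^ (rk * q), X_pow_mem_torusAlg k rk p q ⟨0, 1, by ring⟩⟩
  - Pi.single (r.1, nxF p hp r.2)
      ⟨Polynomial.X ^ (rk * (p * cF p q rk hp a r)),
        X_pow_mem_torusAlg k rk p q ⟨cF p q rk hp a r, 0, by ring⟩⟩

lemma cF_key (p q rk : ℕ) (hp : 0 < p) (Δ : Set ℕ)
    (hmod : ∀ γ ∈ GammaT rk p q, ∀ d ∈ Δ, γ + d ∈ Δ)
    (a : ℕ → ℕ → ℕ) (ha : IsPBasis rk p q Δ a) (r : Fin rk × Fin p) :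
    a (r.1 : ℕ) ((nxF p hp r.2 : Fin p) : ℕ) + p * cF p q rk hp a r
      = a (r.1 : ℕ) (r.2 : ℕ) + q := by
  obtain ⟨i, j⟩ := r
  obtain ⟨hmem, hmodj, hmin⟩ := ha (i : ℕ) i.isLt (j : ℕ) j.isLt
  obtain ⟨hmem1, hmod1, hmin1⟩ := ha (i : ℕ) i.isLt (((j : ℕ) + 1) % p) (Nat.mod_lt _ hp)
  have hstep : rk * (a (i : ℕ) (j : ℕ) + q) + (i : ℕ) ∈ Δ := by
    have h0 := hmod (rk * q) ⟨0, 1, by ring⟩ _ hmem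
    have he : rk * q + (rk * a (i : ℕ) (j : ℕ) + (i : ℕ))
        = rk * (a (i : ℕ) (j : ℕ) + q) + (i : ℕ) := by ring
    rwa [he] at h0
  have hmodq : (a (i : ℕ) (j : ℕ) + q) % p = ((((j : ℕ) + 1) % p) * q) % p := by
    have h1 : a (i : ℕ) (j : ℕ) + q ≡ (j : ℕ) * q + q [MOD p] := Nat.ModEq.add_right q hmodj
    have h2 : (j : ℕ) * q + q = ((j : ℕ) + 1) * q := by ring
    have h3 : (((j : ℕ) + 1) % p) * q ≡ ((j : ℕ) + 1) * q [MOD p] :=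
      Nat.ModEq.mul_right q (Nat.mod_modEq _ p)
    exact h1.trans (h2 ▸ h3.symm)
  have hle := hmin1 _ hstep hmodq
  have hdvd : p ∣ (a (i : ℕ) (j : ℕ) + q - a (i : ℕ) (((j : ℕ) + 1) % p)) := by
    have h4 : a (i : ℕ) (((j : ℕ) + 1) % p) ≡ a (i : ℕ) (j : ℕ) + q [MOD p] :=
      hmod1.trans hmodq.symm
    exact (Nat.modEq_iff_dvd' hle).mp h4
  have h5 : p * cF p q rk hp a (i, j)
      = a (i : ℕ) (j : ℕ) + q - a (i : ℕ) (((j : ℕ) + 1) % p) := by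
    unfold cF nxF
    exact Nat.mul_div_cancel' hdvd
  show a (i : ℕ) (((j : ℕ) + 1) % p) + p * cF p q rk hp a (i, j) = a (i : ℕ) (j : ℕ) + q
  rw [h5]
  omega

lemma sF_syz (k : Type*) [Field k] (p q rk : ℕ) (hp : 0 < p) (Δ : Set ℕ)
    (hmod : ∀ γ ∈ GammaT rk p q, ∀ d ∈ Δ, γ + d ∈ Δ)
    (a : ℕ → ℕ → ℕ) (ha : IsPBasis rk p q Δ a) (r0 : Fin rk × Fin p) :
    ∑ r : Fin rk × Fin p,
      ((sF k p q rk hp a r0 r : Polynomial k))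
        * Polynomial.X ^ (rk * a (r.1 : ℕ) (r.2 : ℕ) + (r.1 : ℕ)) = 0 := by
  have hsum : ∀ (r1 : Fin rk × Fin p) (x : ↥(torusAlg k rk p q)),
      ∑ r : Fin rk × Fin p,
        (((Pi.single r1 x : (Fin rk × Fin p) → ↥(torusAlg k rk p q)) r) : Polynomial k)
          * Polynomial.X ^ (rk * a (r.1 : ℕ) (r.2 : ℕ) + (r.1 : ℕ))
      = (x : Polynomial k) * Polynomial.X ^ (rk * a (r1.1 : ℕ) (r1.2 : ℕ) + (r1.1 : ℕ)) := by
    intro r1 x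
    rw [Finset.sum_eq_single_of_mem r1 (Finset.mem_univ r1)
      (fun r' _ hne => by rw [Pi.single_eq_of_ne hne]; simp), Pi.single_eq_same]
  unfold sF
  have hco : ∀ (x y : ↥(torusAlg k rk p q)),
      ((x - y : ↥(torusAlg k rk p q)) : Polynomial k)
        = (x : Polynomial k) - (y : Polynomial k) :=
    fun x y => map_sub ((torusAlg k rk p q).val) x y
  simp only [Pi.sub_apply, hco, sub_mul]
  rw [Finset.sum_sub_distrib, hsum, hsum]
  show Polynomial.X ^ (rk * q) * _ - Polynomial.X ^ (rk * (p * cF p q rk hp a r0)) * _ = 0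
  rw [← pow_add, ← pow_add]
  rw [sub_eq_zero]
  congr 1
  have hk := cF_key p q rk hp Δ hmod a ha r0
  have h2 : rk * q + (rk * a (r0.1 : ℕ) (r0.2 : ℕ) + (r0.1 : ℕ))
      = rk * (a (r0.1 : ℕ) (r0.2 : ℕ) + q) + (r0.1 : ℕ) := by ring
  have h3 : rk * (p * cF p q rk hp a r0)
        + (rk * a (((r0.1, nxF p hp r0.2) : Fin rk × Fin p).1 : ℕ)
            (((r0.1, nxF p hp r0.2) : Fin rk × Fin p).2 : ℕ)
          + (((r0.1, nxF p hp r0.2) : Fin rk × Fin p).1 : ℕ))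
      = rk * (a (r0.1 : ℕ) ((nxF p hp r0.2 : Fin p) : ℕ) + p * cF p q rk hp a r0)
          + (r0.1 : ℕ) := by ring
  rw [h2, h3, hk]

lemma nxF_ne (p : ℕ) (hp : 0 < p) (hp2 : 2 ≤ p) (j : Fin p) : nxF p hp j ≠ j := by
  intro h
  have hval := congrArg Fin.val h
  simp only [nxF] at hval
  rcases Nat.lt_or_ge ((j : ℕ) + 1) p with hlt | hge
  · rw [Nat.mod_eq_of_lt hlt] at hval; omega
  · have hj := j.isLt
    have hh : (j : ℕ) + 1 = p := by omega
    rw [hh, Nat.mod_self] at hval; omega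


/-- Let `Δ` be a standard rank-`rk` `Γ̃`-module with `p`-basis
`b_{i,j} = rk·a_{i,j} + i`, and let `φ : A^{rk·p} → k[t]` be the `A`-linear map sending
`e_{(i,j)}` to `t^{b_{i,j}}`.  Then the module of syzygies `ker φ` admits a minimal
generating set over `A` consisting of vectors with exactly two nonzero coordinates, of the
form `t^γ·e_{(i,j)} - t^{γ'}·e_{(u,v)}` with `γ, γ' ∈ Γ̃`. -/
theorem syzygies_minimal_basis_binomial
    {k : Type*} [Field k]
    (p q rk : ℕ) (hp : 0 < p) (hpq : p < q) (hcop : Nat.Coprime p q) (hrk : 1 ≤ rk)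
    (Δ : Set ℕ)
    (hmod : ∀ γ ∈ GammaT rk p q, ∀ d ∈ Δ, γ + d ∈ Δ)
    (hstd : ∀ i < rk, i ∈ Δ)
    (a : ℕ → ℕ → ℕ) (ha : IsPBasis rk p q Δ a) :
    ∃ G : Set ((Fin rk × Fin p) → ↥(torusAlg k rk p q)),
      (∀ w ∈ G,
        ∑ r : Fin rk × Fin p,
          (w r : Polynomial k) * Polynomial.X ^ (rk * a (r.1 : ℕ) (r.2 : ℕ) + (r.1 : ℕ))
          = 0) ∧
      (∀ v : (Fin rk × Fin p) → ↥(torusAlg k rk p q),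
        (∑ r : Fin rk × Fin p,
            (v r : Polynomial k) * Polynomial.X ^ (rk * a (r.1 : ℕ) (r.2 : ℕ) + (r.1 : ℕ))
            = 0) →
        v ∈ Submodule.span (↥(torusAlg k rk p q)) G) ∧
      (∀ G' ⊆ G, G' ≠ G →
        ∃ v : (Fin rk × Fin p) → ↥(torusAlg k rk p q),
          (∑ r : Fin rk × Fin p,
              (v r : Polynomial k) * Polynomial.X ^ (rk * a (r.1 : ℕ) (r.2 : ℕ) + (r.1 : ℕ))
              = 0) ∧
          v ∉ Submodule.span (↥(torusAlg k rk p q)) G') ∧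
      (∀ w ∈ G,
        ∃ (r r' : Fin rk × Fin p) (γ γ' : ℕ),
          γ ∈ GammaT rk p q ∧ γ' ∈ GammaT rk p q ∧ r ≠ r' ∧
          (w r : Polynomial k) = Polynomial.X ^ γ ∧
          (w r' : Polynomial k) = -(Polynomial.X ^ γ') ∧
          ∀ s, s ≠ r → s ≠ r' → w s = 0) := by
  classical
  have hrk0 : 0 < rk := hrk
  have hamod : ∀ i < rk, ∀ j < p, a i j % p = (j * q) % p := fun i hi j hj => (ha i hi j hj).2.1
  have hcsub : ∀ (x y : ↥(torusAlg k rk p q)),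
      ((x - y : ↥(torusAlg k rk p q)) : Polynomial k)
        = (x : Polynomial k) - (y : Polynomial k) :=
    fun x y => map_sub (torusAlg k rk p q).val x y
  have hcmul : ∀ (x y : ↥(torusAlg k rk p q)),
      ((x * y : ↥(torusAlg k rk p q)) : Polynomial k)
        = (x : Polynomial k) * (y : Polynomial k) :=
    fun x y => map_mul (torusAlg k rk p q).val x y
  -- linearity of the defining sum
  have hphi : ∀ (v w : (Fin rk × Fin p) → ↥(torusAlg k rk p q)) (x : ↥(torusAlg k rk p q)),
      (∑ r : Fin rk × Fin p, (((v - x • w) r : ↥(torusAlg k rk p q)) : Polynomial k)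
          * Polynomial.X ^ (rk * a (r.1 : ℕ) (r.2 : ℕ) + (r.1 : ℕ)))
      = (∑ r : Fin rk × Fin p, (v r : Polynomial k)
          * Polynomial.X ^ (rk * a (r.1 : ℕ) (r.2 : ℕ) + (r.1 : ℕ)))
        - (x : Polynomial k) * ∑ r : Fin rk × Fin p, (w r : Polynomial k)
          * Polynomial.X ^ (rk * a (r.1 : ℕ) (r.2 : ℕ) + (r.1 : ℕ)) := by
    intro v w x
    rw [Finset.mul_sum, ← Finset.sum_sub_distrib]
    apply Finset.sum_congr rfl
    intro r _
    have h0 : (v - x • w) r = v r - x * w r := by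
      simp [Pi.sub_apply, Pi.smul_apply, smul_eq_mul]
    have h1 : (((v - x • w) r : ↥(torusAlg k rk p q)) : Polynomial k)
        = (v r : Polynomial k) - (x : Polynomial k) * (w r : Polynomial k) := by
      rw [h0, hcsub, hcmul]
    rw [h1]
    ring
  -- generation
  have hgen : ∀ (N : ℕ) (v : (Fin rk × Fin p) → ↥(torusAlg k rk p q)),
      (∑ r : Fin rk × Fin p, ∑ t ∈ ((v r : Polynomial k)).support, Bf p q rk t) = N →
      (∑ r : Fin rk × Fin p,
          (v r : Polynomial k) * Polynomial.X ^ (rk * a (r.1 : ℕ) (r.2 : ℕ) + (r.1 : ℕ)) = 0) →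
      v ∈ Submodule.span (↥(torusAlg k rk p q)) (Set.range (sF k p q rk hp a)) := by
    intro N
    induction N using Nat.strong_induction_on with
    | _ N ih =>
      intro v hN hv
      by_cases hall : ∀ r : Fin rk × Fin p, ∀ n ∈ ((v r : Polynomial k)).support, Bf p q rk n = 0
      · rw [base_zero p q rk hp hrk0 hcop a hamod v hall hv]
        exact Submodule.zero_mem _
      · push_neg at hall
        obtain ⟨r0, n, hnsupp, hBn⟩ := hall
        have hcne : (v r0 : Polynomial k).coeff n ≠ 0 := Polynomial.mem_support_iff.mp hnsupp
        have hnG : n ∈ GammaT rk p q := coeff_mem_gammaT k rk p q (v r0).2 hcne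
        obtain ⟨m, hmG, hnm, hBc⟩ := key_step p q rk hp hrk0 hcop hnG hBn
        obtain ⟨hm'G, hBm'⟩ := hBc (cF p q rk hp a r0)
        have hp2 : 2 ≤ p := by
          by_contra h
          have hp1 : p = 1 := by omega
          have hlt := Bf_lt p q rk n hp
          omega
        have hner : r0 ≠ (r0.1, nxF p hp r0.2) := by
          intro h
          exact nxF_ne p hp hp2 r0.2 (congrArg Prod.snd h).symm
        set cf := (v r0 : Polynomial k).coeff n with hcf
        have hxmem : Polynomial.C cf * Polynomial.X ^ m ∈ torusAlg k rk p q := by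
          apply mul_mem ?_ (X_pow_mem_torusAlg k rk p q hmG)
          have h := (torusAlg k rk p q).algebraMap_mem cf
          rwa [Polynomial.algebraMap_eq] at h
        set x : ↥(torusAlg k rk p q) := ⟨Polynomial.C cf * Polynomial.X ^ m, hxmem⟩ with hx
        set w := v - x • sF k p q rk hp a r0 with hw
        -- coordinates of sF r0
        have hs00 : ((sF k p q rk hp a r0 r0 : ↥(torusAlg k rk p q)) : Polynomial k)
            = Polynomial.X ^ (rk * q) := by
          unfold sF
          rw [Pi.sub_apply, Pi.single_eq_same, Pi.single_eq_of_ne hner]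
          simp
        have hs01 : ((sF k p q rk hp a r0 (r0.1, nxF p hp r0.2) : ↥(torusAlg k rk p q))
              : Polynomial k)
            = -(Polynomial.X ^ (rk * (p * cF p q rk hp a r0))) := by
          unfold sF
          rw [Pi.sub_apply, Pi.single_eq_same, Pi.single_eq_of_ne (Ne.symm hner)]
          simp
        have hs0o : ∀ r, r ≠ r0 → r ≠ (r0.1, nxF p hp r0.2) → sF k p q rk hp a r0 r = 0 := by
          intro r h1 h2
          unfold sF
          rw [Pi.sub_apply, Pi.single_eq_of_ne h1, Pi.single_eq_of_ne h2, sub_zero]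
        -- coordinates of w
        have hwr0 : (w r0 : Polynomial k)
            = (v r0 : Polynomial k) - Polynomial.C cf * Polynomial.X ^ n := by
          rw [hw]
          have h0 : (v - x • sF k p q rk hp a r0) r0 = v r0 - x * sF k p q rk hp a r0 r0 := by
            simp [Pi.sub_apply, Pi.smul_apply, smul_eq_mul]
          rw [h0, hcsub, hcmul, hs00]
          have hxc : ((x : ↥(torusAlg k rk p q)) : Polynomial k)
              = Polynomial.C cf * Polynomial.X ^ m := rfl
          rw [hxc, hnm, pow_add]
          ring
        have hwr1 : (w (r0.1, nxF p hp r0.2) : Polynomial k)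
            = (v (r0.1, nxF p hp r0.2) : Polynomial k)
              + Polynomial.C cf * Polynomial.X ^ (m + rk * (p * cF p q rk hp a r0)) := by
          rw [hw]
          have h0 : (v - x • sF k p q rk hp a r0) (r0.1, nxF p hp r0.2)
              = v (r0.1, nxF p hp r0.2) - x * sF k p q rk hp a r0 (r0.1, nxF p hp r0.2) := by
            simp [Pi.sub_apply, Pi.smul_apply, smul_eq_mul]
          rw [h0, hcsub, hcmul, hs01]
          have hxc : ((x : ↥(torusAlg k rk p q)) : Polynomial k)
              = Polynomial.C cf * Polynomial.X ^ m := rfl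
          rw [hxc]
          rw [pow_add]
          ring
        have hwo : ∀ r, r ≠ r0 → r ≠ (r0.1, nxF p hp r0.2) → w r = v r := by
          intro r h1 h2
          rw [hw]
          have h0 : (v - x • sF k p q rk hp a r0) r = v r - x * sF k p q rk hp a r0 r := by
            simp [Pi.sub_apply, Pi.smul_apply, smul_eq_mul]
          rw [h0, hs0o r h1 h2, mul_zero, sub_zero]
        -- supports
        have hsupp0 : ((w r0 : Polynomial k)).support
            = ((v r0 : Polynomial k)).support.erase n := by
          ext t
          simp only [Polynomial.mem_support_iff, Finset.mem_erase, hwr0,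
            Polynomial.coeff_sub, Polynomial.coeff_C_mul, Polynomial.coeff_X_pow]
          by_cases ht : t = n
          · subst ht; simp [hcf]
          · simp [ht]
        have hsupp1 : ((w (r0.1, nxF p hp r0.2) : Polynomial k)).support
            ⊆ insert (m + rk * (p * cF p q rk hp a r0))
              ((v (r0.1, nxF p hp r0.2) : Polynomial k)).support := by
          intro t ht
          rw [Polynomial.mem_support_iff, hwr1, Polynomial.coeff_add,
            Polynomial.coeff_C_mul, Polynomial.coeff_X_pow] at ht
          by_cases htm : t = m + rk * (p * cF p q rk hp a r0)
          · rw [htm]; exact Finset.mem_insert_self _ _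
          · refine Finset.mem_insert_of_mem (Polynomial.mem_support_iff.mpr ?_)
            simpa [htm] using ht
        -- measure decreases
        have hsplit : ∀ u : (Fin rk × Fin p) → ↥(torusAlg k rk p q),
            (∑ r : Fin rk × Fin p, ∑ t ∈ ((u r : Polynomial k)).support, Bf p q rk t)
            = ((∑ r ∈ (Finset.univ.erase r0).erase (r0.1, nxF p hp r0.2),
                  ∑ t ∈ ((u r : Polynomial k)).support, Bf p q rk t)
                + ∑ t ∈ ((u (r0.1, nxF p hp r0.2) : Polynomial k)).support, Bf p q rk t)
              + ∑ t ∈ ((u r0 : Polynomial k)).support, Bf p q rk t := by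
          intro u
          rw [← Finset.sum_erase_add Finset.univ _ (Finset.mem_univ r0),
            ← Finset.sum_erase_add (Finset.univ.erase r0) _
              (Finset.mem_erase.mpr ⟨Ne.symm hner, Finset.mem_univ _⟩)]
        have hE : (∑ r ∈ (Finset.univ.erase r0).erase (r0.1, nxF p hp r0.2),
              ∑ t ∈ ((w r : Polynomial k)).support, Bf p q rk t)
            = ∑ r ∈ (Finset.univ.erase r0).erase (r0.1, nxF p hp r0.2),
              ∑ t ∈ ((v r : Polynomial k)).support, Bf p q rk t := by
          apply Finset.sum_congr rfl
          intro r hr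
          have h1 := (Finset.mem_erase.mp hr).1
          have h2 := (Finset.mem_erase.mp (Finset.mem_erase.mp hr).2).1
          rw [hwo r h2 h1]
        have h_r0' : (∑ t ∈ ((w r0 : Polynomial k)).support, Bf p q rk t) + Bf p q rk n
            = ∑ t ∈ ((v r0 : Polynomial k)).support, Bf p q rk t := by
          rw [hsupp0]
          exact Finset.sum_erase_add _ _ hnsupp
        have h_r1' : (∑ t ∈ ((w (r0.1, nxF p hp r0.2) : Polynomial k)).support, Bf p q rk t)
            ≤ Bf p q rk (m + rk * (p * cF p q rk hp a r0))
              + ∑ t ∈ ((v (r0.1, nxF p hp r0.2) : Polynomial k)).support, Bf p q rk t := by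
          refine le_trans (Finset.sum_le_sum_of_subset hsupp1) ?_
          by_cases hmm : (m + rk * (p * cF p q rk hp a r0))
              ∈ ((v (r0.1, nxF p hp r0.2) : Polynomial k)).support
          · rw [Finset.insert_eq_self.mpr hmm]
            exact Nat.le_add_left _ _
          · rw [Finset.sum_insert hmm]
        have hB1 : 1 ≤ Bf p q rk n := Nat.one_le_iff_ne_zero.mpr hBn
        have hμlt : (∑ r : Fin rk × Fin p, ∑ t ∈ ((w r : Polynomial k)).support, Bf p q rk t)
            < N := by
          rw [← hN, hsplit w, hsplit v, hE]
          omega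
        -- w is a syzygy
        have hsw : (∑ r : Fin rk × Fin p,
            (w r : Polynomial k) * Polynomial.X ^ (rk * a (r.1 : ℕ) (r.2 : ℕ) + (r.1 : ℕ))) = 0 := by
          rw [hw, hphi v (sF k p q rk hp a r0) x, hv,
            sF_syz k p q rk hp Δ hmod a ha r0, mul_zero, sub_zero]
        have hwmem := ih _ hμlt w rfl hsw
        have hveq : v = w + x • sF k p q rk hp a r0 := by
          rw [hw]; exact (sub_add_cancel _ _).symm
        rw [hveq]
        exact Submodule.add_mem _ hwmem
          (Submodule.smul_mem _ x (Submodule.subset_span ⟨r0, rfl⟩))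
  -- extraction of the minimal generating subset
  obtain ⟨G₀, hG₀sub, hG₀gen, hG₀min⟩ := exists_minimal_subset
    (fun G : Set ((Fin rk × Fin p) → ↥(torusAlg k rk p q)) =>
      ∀ v : (Fin rk × Fin p) → ↥(torusAlg k rk p q),
        (∑ r : Fin rk × Fin p,
            (v r : Polynomial k) * Polynomial.X ^ (rk * a (r.1 : ℕ) (r.2 : ℕ) + (r.1 : ℕ)) = 0) →
        v ∈ Submodule.span (↥(torusAlg k rk p q)) G)
    (Set.range (sF k p q rk hp a)).ncard (Set.range (sF k p q rk hp a))
    (Set.finite_range _) rfl (fun v hv => hgen _ v rfl hv)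
  refine ⟨G₀, ?_, hG₀gen, ?_, ?_⟩
  · intro w hw
    obtain ⟨r0, rfl⟩ := hG₀sub hw
    exact sF_syz k p q rk hp Δ hmod a ha r0
  · intro G' h1 h2
    have h3 := hG₀min G' h1 h2
    push_neg at h3
    exact h3
  · intro w hw
    by_cases hp2 : 2 ≤ p
    · obtain ⟨r0, rfl⟩ := hG₀sub hw
      have hner : r0 ≠ (r0.1, nxF p hp r0.2) := by
        intro h
        exact nxF_ne p hp hp2 r0.2 (congrArg Prod.snd h).symm
      refine ⟨r0, (r0.1, nxF p hp r0.2), rk * q, rk * (p * cF p q rk hp a r0),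
        ⟨0, 1, by ring⟩, ⟨cF p q rk hp a r0, 0, by ring⟩, hner, ?_, ?_, ?_⟩
      · unfold sF
        rw [Pi.sub_apply, Pi.single_eq_same, Pi.single_eq_of_ne hner]
        simp
      · unfold sF
        rw [Pi.sub_apply, Pi.single_eq_same, Pi.single_eq_of_ne (Ne.symm hner)]
        simp
      · intro s hs1 hs2
        unfold sF
        rw [Pi.sub_apply, Pi.single_eq_of_ne hs1, Pi.single_eq_of_ne hs2, sub_zero]
    · exfalso
      have hPempty : ∀ v : (Fin rk × Fin p) → ↥(torusAlg k rk p q),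
          (∑ r : Fin rk × Fin p,
              (v r : Polynomial k) * Polynomial.X ^ (rk * a (r.1 : ℕ) (r.2 : ℕ) + (r.1 : ℕ)) = 0) →
          v ∈ Submodule.span (↥(torusAlg k rk p q))
            (∅ : Set ((Fin rk × Fin p) → ↥(torusAlg k rk p q))) := by
        intro v hv
        have hall : ∀ r : Fin rk × Fin p, ∀ t ∈ ((v r : Polynomial k)).support,
            Bf p q rk t = 0 := by
          intro r t ht
          have hlt := Bf_lt p q rk t hp
          omega
        rw [base_zero p q rk hp hrk0 hcop a hamod v hall hv]
        exact Submodule.zero_mem _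
      have hne : (∅ : Set ((Fin rk × Fin p) → ↥(torusAlg k rk p q))) ≠ G₀ := by
        intro h
        rw [← h] at hw
        exact hw
      exact hG₀min ∅ (Set.empty_subset _) hne hPempty
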